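/- In $\mathbb{Z}_2[w_1,w_2,w_3,w_4]$, suppose $w_1 w_4 h = \alpha\, \overline w_{2^t-3}$ for some $h \in \mathbb{Z}_2[w_1,w_2,w_3,w_4]$, some $\alpha \in \mathbb{Z}_2$, and some $t\geq 3$, where $\overline w_r$ is the degree-$r$ component of the inverse of $1+w_1+w_2+w_3+w_4$ in the power series ring. Then $\alpha = 0$ and hence $w_1 w_4 h = 0$. -/
import Mathlib


open MvPolynomial

/-- In `ℤ₂[w₁,w₂,w₃,w₄]` (with `X i = w_{i+1}`), let `w̄_r` be defined by
the power-series identity `(1 + w₁ + w₂ + w₃ + w₄) · ∑ r, w̄_r = 1` (encoded degreewise: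
`w̄₀ = 1`, `w̄_r = 0` for `r < 0`, `w̄_r + ∑_{i=1}^{4} wᵢ w̄_{r-i} = 0` for `r ≥ 1`).
If `w₁ w₄ h = α · w̄_{2^t-3}` for some `h`, some `α ∈ ℤ₂` and some `t ≥ 3`, then
`α = 0` and hence `w₁ w₄ h = 0`. -/
theorem stmt_18
    (wb : ℤ → MvPolynomial (Fin 4) (ZMod 2))
    (hneg : ∀ r : ℤ, r < 0 → wb r = 0)
    (h0 : wb 0 = 1)
    (hid : ∀ r : ℤ, 1 ≤ r →
      wb r + ∑ i : Fin 4, X i * wb (r - ((i : ℤ) + 1)) = 0)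
    (t : ℕ) (ht : 3 ≤ t)
    (h : MvPolynomial (Fin 4) (ZMod 2)) (α : ZMod 2)
    (heq : X 0 * X 3 * h = α • wb ((2 : ℤ) ^ t - 3)) :
    α = 0 ∧ X 0 * X 3 * h = 0 := by
  -- substitution killing w₂, w₃, w₄
  set f : MvPolynomial (Fin 4) (ZMod 2) →ₐ[ZMod 2] MvPolynomial (Fin 4) (ZMod 2) :=
    aeval (fun i : Fin 4 => if i = 0 then X 0 else 0) with hf
  have hX0 : f (X 0) = X 0 := by simp [hf]
  have hX1 : f (X 1) = 0 := by simp [hf]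
  have hX2 : f (X 2) = 0 := by simp [hf]
  have hX3 : f (X 3) = 0 := by simp [hf]
  -- f (wb n) = X0 ^ n for natural n
  have key : ∀ n : ℕ, f (wb (n : ℤ)) = X 0 ^ n := by
    intro n
    induction n with
    | zero => simpa using congrArg f h0
    | succ n ih =>
      have hr := hid ((n : ℤ) + 1) (by omega)
      have := congrArg f hr
      rw [map_add, map_sum] at this
      rw [Fin.sum_univ_four] at this
      simp only [map_mul, hX0, hX1, hX2, hX3, zero_mul, add_zero] at this
      have e1 : ((n : ℤ) + 1) - ((0 : Fin 4) : ℤ) - 1 = (n : ℤ) := by simp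
      have : f (wb ((n : ℤ) + 1)) + X 0 * f (wb ((n : ℤ) + 1 - ((((0 : Fin 4)) : ℤ) + 1))) = 0 := by
        simpa using this
      have h2 : ((n : ℤ) + 1 - ((((0 : Fin 4)) : ℤ) + 1)) = (n : ℤ) := by simp
      rw [h2, ih] at this
      have hchar : f (wb ((n : ℤ) + 1)) = X 0 * X 0 ^ n := by
        have := add_eq_zero_iff_eq_neg.mp this
        simpa [CharTwo.neg_eq] using this
      push_cast
      rw [hchar]
      ring
  -- apply f to heq
  have hn : ((2 : ℤ) ^ t - 3) = (((2 ^ t - 3 : ℕ) : ℤ)) := by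
    have h8 : 3 ≤ 2 ^ t := le_trans (by norm_num) (Nat.pow_le_pow_right (by norm_num) ht)
    push_cast [h8]
    ring
  have happ := congrArg f heq
  rw [map_mul, map_mul, hX0, hX3, map_smul, hn, key] at happ
  have : (0 : MvPolynomial (Fin 4) (ZMod 2)) = C α * X 0 ^ (2 ^ t - 3) := by
    rw [← smul_eq_C_mul]
    simpa using happ
  have hα : α = 0 := by
    rcases mul_eq_zero.mp this.symm with hc | hx
    · exact (map_eq_zero _).mp hc
    · exact absurd hx (pow_ne_zero _ (X_ne_zero 0))
  refine ⟨hα, ?_⟩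
  rw [heq, hα, zero_smul]
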